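/- Suppose u₋, u₊ : [0,π] → ℝ are C¹ functions such that every zero of u₊ - u₋ is simple (i.e., (u₊-u₋)'(x) ≠ 0 whenever (u₊-u₋)(x) = 0), and similarly for C¹ functions v₋, v₊, with u₊ - u₋ and v₊ - v₋ having exactly the same zero set in [0,π]. Then the function l : [0,π] → ℝ defined by l(x) = (u₊(x)-u₋(x))/(v₊(x)-v₋(x)) when v₊(x) ≠ v₋(x) and l(x) = (u₊-u₋)'(x)/(v₊-v₋)'(x) when v₊(x) = v₋(x), is continuous and nowhere zero on [0,π]. -/

import Mathlib

open Filter Topology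

/-- If all zeros of up - um and of vp - vm in [0,π] are simple and the two
differences have the same zero set in [0,π], then the coefficient
l(x) = (up-um)(x)/(vp-vm)(x) (resp. the quotient of derivatives at common zeros)
is continuous and nowhere zero on [0,π]. -/
theorem stmt5 (um up vm vp : ℝ → ℝ)
    (hu : ContDiff ℝ 1 um) (hu' : ContDiff ℝ 1 up)
    (hv : ContDiff ℝ 1 vm) (hv' : ContDiff ℝ 1 vp)
    (hsimpleu : ∀ x ∈ Set.Icc (0 : ℝ) Real.pi,
      up x - um x = 0 → deriv (fun y => up y - um y) x ≠ 0)
    (hsimplev : ∀ x ∈ Set.Icc (0 : ℝ) Real.pi,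
      vp x - vm x = 0 → deriv (fun y => vp y - vm y) x ≠ 0)
    (hzero : ∀ x ∈ Set.Icc (0 : ℝ) Real.pi, (up x - um x = 0 ↔ vp x - vm x = 0))
    (l : ℝ → ℝ)
    (hl : ∀ x, l x = if vp x = vm x
      then deriv (fun y => up y - um y) x / deriv (fun y => vp y - vm y) x
      else (up x - um x) / (vp x - vm x)) :
    ContinuousOn l (Set.Icc (0 : ℝ) Real.pi) ∧
      ∀ x ∈ Set.Icc (0 : ℝ) Real.pi, l x ≠ 0 := by
  set f : ℝ → ℝ := fun y => up y - um y with hf_def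
  set g : ℝ → ℝ := fun y => vp y - vm y with hg_def
  have hf : ContDiff ℝ 1 f := hu'.sub hu
  have hg : ContDiff ℝ 1 g := hv'.sub hv
  have hfd : ∀ x : ℝ, HasDerivAt f (deriv f x) x := fun x =>
    (hf.differentiable one_ne_zero x).hasDerivAt
  have hgd : ∀ x : ℝ, HasDerivAt g (deriv g x) x := fun x =>
    (hg.differentiable one_ne_zero x).hasDerivAt
  have key : ∀ x ∈ Set.Icc (0 : ℝ) Real.pi, ContinuousAt l x := by
    intro x hx
    by_cases hgx : vp x = vm x
    · -- common zero case
      have hgx0 : g x = 0 := sub_eq_zero.mpr hgx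
      have hfx0 : f x = 0 := (hzero x hx).mpr hgx0
      have hf' : deriv f x ≠ 0 := hsimpleu x hx hfx0
      have hg' : deriv g x ≠ 0 := hsimplev x hx hgx0
      have hsf : Tendsto (slope f x) (𝓝[≠] x) (𝓝 (deriv f x)) :=
        hasDerivAt_iff_tendsto_slope.mp (hfd x)
      have hsg : Tendsto (slope g x) (𝓝[≠] x) (𝓝 (deriv g x)) :=
        hasDerivAt_iff_tendsto_slope.mp (hgd x)
      have hq : Tendsto (fun y => slope f x y / slope g x y) (𝓝[≠] x)
          (𝓝 (deriv f x / deriv g x)) := hsf.div hsg hg'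
      have hev : ∀ᶠ y in 𝓝[≠] x, l y = slope f x y / slope g x y := by
        filter_upwards [hsg.eventually_ne hg', self_mem_nhdsWithin] with y hy1 hy2
        have hyx : y - x ≠ 0 := sub_ne_zero.mpr hy2
        have hgy : g y ≠ 0 := by
          intro h
          apply hy1
          simp [slope_def_field, hgx0, h]
        have hvy : vp y ≠ vm y := fun h => hgy (sub_eq_zero.mpr h)
        rw [hl y, if_neg hvy]
        rw [slope_def_field, slope_def_field, hgx0, hfx0, sub_zero, sub_zero]
        rw [div_div_div_comm, div_self hyx, div_one]
      have h1 : Tendsto l (𝓝[≠] x) (𝓝 (l x)) := by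
        rw [hl x, if_pos hgx]
        exact hq.congr' (hev.mono fun y h => h.symm)
      rw [ContinuousAt, ← nhdsNE_sup_pure x]
      exact Tendsto.sup h1 (tendsto_pure_nhds l x)
    · have hgx0 : g x ≠ 0 := sub_ne_zero.mpr hgx
      have hc : ContinuousAt (fun y => f y / g y) x :=
        (hf.continuous.continuousAt).div (hg.continuous.continuousAt) hgx0
      apply hc.congr
      have hev : ∀ᶠ y in 𝓝 x, g y ≠ 0 := hg.continuous.continuousAt.eventually_ne hgx0
      filter_upwards [hev] with y hy
      rw [hl y, if_neg (fun h => hy (sub_eq_zero.mpr h))]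
  refine ⟨fun x hx => (key x hx).continuousWithinAt, ?_⟩
  intro x hx
  rw [hl x]
  by_cases hgx : vp x = vm x
  · have hgx0 : g x = 0 := sub_eq_zero.mpr hgx
    have hfx0 : f x = 0 := (hzero x hx).mpr hgx0
    rw [if_pos hgx]
    exact div_ne_zero (hsimpleu x hx hfx0) (hsimplev x hx hgx0)
  · have hgx0 : g x ≠ 0 := sub_ne_zero.mpr hgx
    have hfx0 : f x ≠ 0 := fun h => hgx0 ((hzero x hx).mp h)
    rw [if_neg hgx]
    exact div_ne_zero hfx0 hgx0
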